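/- Let h ≥ 1 groups have Lomax distributions with parameters α₁ ≥ α₂ ≥ … ≥ α_h > 1, and let r₁, …, r_h ≥ 0 with r₁ + ⋯ + r_h = B satisfy (1+r_i)^{α_i} = (1+r_j)^{α_j} for all i, j. Then r_i ≤ B/(h - i + 1) for every i. -/
import Mathlib


/-- For `h ≥ 1` Lomax groups with parameters `α₁ ≥ α₂ ≥ ⋯ ≥ α_h > 1` (here 0-indexed by
`Fin h`), if the nonnegative allocation `r` sums to `B` and satisfies
`(1 + r i)^(α i) = (1 + r j)^(α j)` for all `i, j`, then for every `i` (0-indexed),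
`r i ≤ B / (h - i)` — i.e. `r_i ≤ B/(h - i + 1)` in 1-indexed notation. -/
theorem lomax_maxutil_upper (h : ℕ) (hh : 1 ≤ h) (α : Fin h → ℝ)
    (hα1 : ∀ i, 1 < α i)
    (hmono : ∀ i j : Fin h, i ≤ j → α j ≤ α i)
    (r : Fin h → ℝ) (hr : ∀ i, 0 ≤ r i) (B : ℝ) (hsum : ∑ i, r i = B)
    (heq : ∀ i j : Fin h, (1 + r i) ^ (α i) = (1 + r j) ^ (α j)) :
    ∀ i : Fin h, r i ≤ B / ((h : ℝ) - (i : ℕ)) := by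
  have hrmono : ∀ i j : Fin h, i ≤ j → r i ≤ r j := by
    intro i j hij
    by_contra hlt
    push_neg at hlt
    have h1 : (1:ℝ) ≤ 1 + r j := by linarith [hr j]
    have h2 : (1 + r j) ^ (α j) ≤ (1 + r j) ^ (α i) :=
      Real.rpow_le_rpow_of_exponent_le h1 (hmono i j hij)
    have h3 : (1 + r j) ^ (α i) < (1 + r i) ^ (α i) :=
      Real.rpow_lt_rpow (by linarith) (by linarith) (by linarith [hα1 i])
    have := heq i j
    linarith
  intro i
  have hcard : (Finset.Ici i).card = h - (i : ℕ) := by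
    simpa using Fin.card_Ici i
  have hle : (Finset.Ici i).card • r i ≤ ∑ j ∈ Finset.Ici i, r j :=
    Finset.card_nsmul_le_sum _ _ _ (fun j hj => hrmono i j (Finset.mem_Ici.mp hj))
  have hsub : ∑ j ∈ Finset.Ici i, r j ≤ ∑ j, r j :=
    Finset.sum_le_sum_of_subset_of_nonneg (Finset.subset_univ _)
      (fun j _ _ => hr j)
  have hpos : (0:ℝ) < (h : ℝ) - (i : ℕ) := by
    have := i.isLt
    have : (i : ℝ) < h := by exact_mod_cast this
    linarith
  rw [le_div_iff₀ hpos]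
  have hcast : ((h - (i : ℕ) : ℕ) : ℝ) = (h : ℝ) - (i : ℕ) := by
    have := i.isLt.le
    push_cast [Nat.cast_sub this]
    ring
  have : ((h - (i : ℕ) : ℕ) : ℝ) * r i ≤ B := by
    rw [← hsum]
    calc ((h - (i : ℕ) : ℕ) : ℝ) * r i = (Finset.Ici i).card • r i := by
          rw [hcard, nsmul_eq_mul]
      _ ≤ ∑ j ∈ Finset.Ici i, r j := hle
      _ ≤ ∑ j, r j := hsub
  rw [hcast] at this
  linarith
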